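/- If a family F of subgroups of G in general position admits, for each index j, an element g_j lying in the intersection of all members of F except the j-th but not in the intersection of all members, then {g_1, ..., g_k} is an irredundant subset of G of size k = |F|; consequently MaxDim(G) ≤ i(G). -/
import Mathlib


/-- A finite subset of a group is irredundant if no element lies in the
subgroup generated by the remaining elements. -/
def Irredundant {G : Type*} [Group G] (s : Finset G) : Prop :=
  ∀ g ∈ s, g ∉ Subgroup.closure ((s : Set G) \ {g})

/-- `mRank G` : maximal size of an irredundant generating set of `G`. -/
noncomputable def mRank (G : Type*) [Group G] : ℕ :=
  sSup {n | ∃ s : Finset G, Irredundant s ∧ Subgroup.closure (s : Set G) = ⊤ ∧ s.card = n}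

/-- `iRank G` : maximal size of an irredundant subset of `G`. -/
noncomputable def iRank (G : Type*) [Group G] : ℕ :=
  sSup {n | ∃ s : Finset G, Irredundant s ∧ s.card = n}

/-- A family of subgroups is in general position. -/
def GenPos {G : Type*} [Group G] {ι : Type*} (H : ι → Subgroup G) : Prop :=
  ∀ I J : Finset ι, I ⊂ J → (⨅ j ∈ J, H j) < (⨅ i ∈ I, H i)

/-- Maximal size of a family of maximal subgroups in general position. -/
noncomputable def MaxDim (G : Type*) [Group G] : ℕ :=
  sSup {k | ∃ M : Fin k → Subgroup G, (∀ j, IsCoatom (M j)) ∧ GenPos M}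

lemma main_aux {G : Type*} [Group G] [DecidableEq G] (k : ℕ)
    (F : Fin k → Subgroup G) (g : Fin k → G)
    (hg : ∀ j, g j ∈ (⨅ i ∈ ({j}ᶜ : Finset (Fin k)), F i) ∧ g j ∉ ⨅ i, F i) :
    Irredundant (Finset.image g Finset.univ) ∧
    (Finset.image g Finset.univ).card = k := by
  have hmem : ∀ j l, l ≠ j → g j ∈ F l := by
    intro j l hlj
    have := (hg j).1
    simp only [Subgroup.mem_iInf, Finset.mem_compl, Finset.mem_singleton] at this
    exact this l hlj
  have hnot : ∀ j, g j ∉ F j := by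
    intro j hj
    apply (hg j).2
    rw [Subgroup.mem_iInf]
    intro l
    by_cases h : l = j
    · exact h ▸ hj
    · exact hmem j l h
  have hinj : Function.Injective g := by
    intro i j hij
    by_contra h
    exact hnot i (hij ▸ hmem j i h)
  constructor
  · intro x hx hcl
    simp only [Finset.mem_image, Finset.mem_univ, true_and] at hx
    obtain ⟨j, rfl⟩ := hx
    have hsub : ((Finset.image g Finset.univ : Finset G) : Set G) \ {g j} ⊆ (F j : Set G) := by
      intro y hy
      obtain ⟨hy1, hy2⟩ := hy
      simp only [Finset.coe_image, Finset.coe_univ, Set.image_univ, Set.mem_range] at hy1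
      obtain ⟨i, rfl⟩ := hy1
      have : i ≠ j := fun h => hy2 (by rw [h]; rfl)
      exact hmem i j fun h => this h.symm
    exact hnot j ((Subgroup.closure_le _).mpr hsub hcl)
  · rw [Finset.card_image_of_injective _ hinj, Finset.card_univ, Fintype.card_fin]

theorem stmt19 {G : Type*} [Group G] [Finite G] [DecidableEq G] (k : ℕ)
    (F : Fin k → Subgroup G) (hgp : GenPos F) (g : Fin k → G)
    (hg : ∀ j, g j ∈ (⨅ i ∈ ({j}ᶜ : Finset (Fin k)), F i) ∧ g j ∉ ⨅ i, F i) :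
    Irredundant (Finset.image g Finset.univ) ∧
    (Finset.image g Finset.univ).card = k ∧
    MaxDim G ≤ iRank G := by
  obtain ⟨h1, h2⟩ := main_aux k F g hg
  refine ⟨h1, h2, ?_⟩
  have : Fintype G := Fintype.ofFinite G
  have hbdd : BddAbove {n | ∃ s : Finset G, Irredundant s ∧ s.card = n} := by
    refine ⟨Fintype.card G, ?_⟩
    rintro n ⟨s, _, rfl⟩
    exact s.card_le_univ
  apply csSup_le
  · exact ⟨0, Fin.elim0, fun j => j.elim0, fun I J hIJ => by
      have : J = ∅ := Finset.eq_empty_of_isEmpty J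
      exact absurd (this ▸ hIJ) (by simp)⟩
  · rintro n ⟨M, hco, hgpM⟩
    have hex : ∀ j : Fin n, ∃ x, x ∈ (⨅ i ∈ ({j}ᶜ : Finset (Fin n)), M i) ∧ x ∉ ⨅ i, M i := by
      intro j
      have hss : ({j}ᶜ : Finset (Fin n)) ⊂ Finset.univ := by
        refine Finset.ssubset_univ_iff.mpr ?_
        intro h
        have : j ∈ ({j}ᶜ : Finset (Fin n)) := h ▸ Finset.mem_univ j
        simp at this
      have hlt := hgpM _ _ hss
      have huniv : (⨅ i ∈ (Finset.univ : Finset (Fin n)), M i) = ⨅ i, M i := by simp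
      rw [huniv] at hlt
      obtain ⟨x, hx1, hx2⟩ := SetLike.exists_of_lt hlt
      exact ⟨x, hx1, hx2⟩
    choose g' hg' using hex
    obtain ⟨_, hc⟩ := main_aux n M g' hg'
    exact le_csSup hbdd ⟨_, main_aux n M g' hg' |>.1, hc⟩
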